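/- In the graph G constructed below: if there exist i ≠ j with ‖v_i − v_j‖_∞ ≤ 1, then rtd(i_S, j_S) ≥ 4α − 2; in particular the roundtrip diameter of G is at least 4α − 2. -/

import Mathlib

open scoped ENNReal

/-- Total weight of the walk that starts at `u` and then visits the vertices of `l` in
order.  Non-edges have weight `⊤`. -/
noncomputable def walkWeight {V : Type*} (w : V → V → ℝ≥0∞) : V → List V → ℝ≥0∞
  | _, [] => 0
  | u, x :: xs => w u x + walkWeight w x xs

/-- Shortest-path distance induced by the weight function `w` (`⊤` if there is no path). -/
noncomputable def netDist {V : Type*} (w : V → V → ℝ≥0∞) (u v : V) : ℝ≥0∞ :=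
  ⨅ (l : List V) (_ : (u :: l).getLast (List.cons_ne_nil u l) = v), walkWeight w u l

/-- Vertex set of the `ℓ∞`-CP graph: `S = Fin n`, then `X₁ = Fin d` and `X₂ = Fin d`. -/
abbrev CPVert (n d : ℕ) : Type := Fin n ⊕ (Fin d ⊕ Fin d)

/-- Edge weights of the `ℓ∞`-CP graph: `i_S → x_{X₁}` of weight `α + v i x`,
`x_{X₁} → i_S` of weight `α - v i x`, `i_S → x_{X₂}` of weight `α - v i x`,
`x_{X₂} → i_S` of weight `α + v i x`, and weight-`α` edges in both directions between any
two distinct vertices of `X₁ ∪ X₂`.  All other pairs are non-edges (weight `⊤`). -/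
noncomputable def cpWeight (n d : ℕ) (α : ℝ) (v : Fin n → Fin d → ℝ) :
    CPVert n d → CPVert n d → ℝ≥0∞
  | Sum.inl i, Sum.inr (Sum.inl x) => ENNReal.ofReal (α + v i x)
  | Sum.inr (Sum.inl x), Sum.inl i => ENNReal.ofReal (α - v i x)
  | Sum.inl i, Sum.inr (Sum.inr x) => ENNReal.ofReal (α - v i x)
  | Sum.inr (Sum.inr x), Sum.inl i => ENNReal.ofReal (α + v i x)
  | Sum.inr a, Sum.inr b => if a = b then ⊤ else ENNReal.ofReal α
  | Sum.inl _, Sum.inl _ => ⊤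

/-- If `‖v i - v j‖_∞ ≤ 1` for some `i ≠ j` (the YES case), then the
roundtrip distance between `i_S` and `j_S` in the `ℓ∞`-CP graph is at least `4α - 2`; in
particular the roundtrip diameter is at least `4α - 2`.  (Here `‖·‖` is the sup norm on
`Fin d → ℝ`, `α ≥ 2`, `ε = 1/(4α)`, and all coordinates lie in `[-(0.5+ε)α, (0.5+ε)α]`.) -/
private lemma edge_lb {n d : ℕ} {α : ℝ} (v : Fin n → Fin d → ℝ)
    (hα : 2 ≤ α) (hv : ∀ i x, |v i x| ≤ α/2 + 1/4) (u w : CPVert n d) :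
    ENNReal.ofReal (α/2 - 1/4) ≤ cpWeight n d α v u w := by
  have h1 : ∀ (k : Fin n) (x : Fin d), α/2 - 1/4 ≤ α + v k x := by
    intro k x; have := abs_le.mp (hv k x); linarith [this.1]
  have h2 : ∀ (k : Fin n) (x : Fin d), α/2 - 1/4 ≤ α - v k x := by
    intro k x; have := abs_le.mp (hv k x); linarith [this.2]
  rcases u with i | x | x <;> rcases w with k | y | y <;>
    simp only [cpWeight] <;>
    first
    | exact le_top
    | exact ENNReal.ofReal_le_ofReal (h1 _ _)
    | exact ENNReal.ofReal_le_ofReal (h2 _ _)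
    | (split
       · exact le_top
       · exact ENNReal.ofReal_le_ofReal (by linarith))

private lemma mid_lb {n d : ℕ} {α : ℝ} (v : Fin n → Fin d → ℝ)
    (p q : Fin d ⊕ Fin d) :
    ENNReal.ofReal α ≤ cpWeight n d α v (Sum.inr p) (Sum.inr q) := by
  simp only [cpWeight]; split
  · exact le_top
  · exact le_rfl

private lemma walk_ge {n d : ℕ} {α : ℝ} (v : Fin n → Fin d → ℝ)
    (hα : 2 ≤ α) (hv : ∀ i x, |v i x| ≤ α/2 + 1/4) :
    ∀ (l : List (CPVert n d)) (u : CPVert n d),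
      ENNReal.ofReal ((α/2 - 1/4) * l.length) ≤ walkWeight (cpWeight n d α v) u l
  | [], u => by simp [walkWeight]
  | x :: xs, u => by
    have ih := walk_ge v hα hv xs x
    calc ENNReal.ofReal ((α/2 - 1/4) * (x :: xs).length)
        = ENNReal.ofReal ((α/2 - 1/4) + (α/2 - 1/4) * xs.length) := by
          congr 1; push_cast [List.length_cons]; ring
      _ ≤ ENNReal.ofReal (α/2 - 1/4) + ENNReal.ofReal ((α/2 - 1/4) * xs.length) :=
          ENNReal.ofReal_add_le
      _ ≤ cpWeight n d α v u x + walkWeight (cpWeight n d α v) x xs :=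
          add_le_add (edge_lb v hα hv u x) ih
      _ = walkWeight (cpWeight n d α v) u (x :: xs) := rfl

private lemma oneway {n d : ℕ} {α : ℝ} (v : Fin n → Fin d → ℝ)
    (hα : 2 ≤ α) (hv : ∀ i x, |v i x| ≤ α/2 + 1/4)
    (a b : Fin n) (hab : a ≠ b) (hcl : ∀ x, |v a x - v b x| ≤ 1) :
    ENNReal.ofReal (2*α - 1) ≤ netDist (cpWeight n d α v) (Sum.inl a) (Sum.inl b) := by
  have hc0 : (0:ℝ) ≤ α/2 - 1/4 := by linarith
  refine le_iInf fun l => le_iInf fun hl => ?_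
  rcases l with _ | ⟨y, _ | ⟨z, _ | ⟨t, _ | ⟨r, rest⟩⟩⟩⟩
  · simp at hl; exact absurd hl hab
  · simp [List.getLast] at hl
    subst hl
    simp [walkWeight, cpWeight]
  · simp [List.getLast] at hl
    subst hl
    rcases y with k | x | x
    · simp [walkWeight, cpWeight]
    · have h1 : (0:ℝ) ≤ α + v a x := by have := abs_le.mp (hv a x); linarith [this.1]
      calc ENNReal.ofReal (2*α - 1)
          ≤ ENNReal.ofReal ((α + v a x) + (α - v b x)) := by
            refine ENNReal.ofReal_le_ofReal ?_
            have := abs_le.mp (hcl x); linarith [this.1]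
        _ = ENNReal.ofReal (α + v a x) + ENNReal.ofReal (α - v b x) :=
            ENNReal.ofReal_add h1 (by have := abs_le.mp (hv b x); linarith [this.2])
        _ ≤ walkWeight (cpWeight n d α v) (Sum.inl a) [Sum.inr (Sum.inl x), Sum.inl b] := by
            simp [walkWeight, cpWeight]
    · have h1 : (0:ℝ) ≤ α - v a x := by have := abs_le.mp (hv a x); linarith [this.2]
      calc ENNReal.ofReal (2*α - 1)
          ≤ ENNReal.ofReal ((α - v a x) + (α + v b x)) := by
            refine ENNReal.ofReal_le_ofReal ?_
            have := abs_le.mp (hcl x); linarith [this.2]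
        _ = ENNReal.ofReal (α - v a x) + ENNReal.ofReal (α + v b x) :=
            ENNReal.ofReal_add h1 (by have := abs_le.mp (hv b x); linarith [this.1])
        _ ≤ walkWeight (cpWeight n d α v) (Sum.inl a) [Sum.inr (Sum.inr x), Sum.inl b] := by
            simp [walkWeight, cpWeight]
  · -- three edges
    rcases y with k | p
    · calc ENNReal.ofReal (2*α - 1) ≤ ⊤ := le_top
        _ ≤ _ := by simp [walkWeight, cpWeight]
    · rcases z with k | q
      · -- edge from inr p to inl k, then from inl k to inl (last) which is top? t could be inr!
        -- t is last = Sum.inl b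
        simp [List.getLast] at hl
        subst hl
        calc ENNReal.ofReal (2*α - 1) ≤ ⊤ := le_top
          _ ≤ _ := by simp [walkWeight, cpWeight]
      · have e1 := edge_lb v hα hv (Sum.inl a : CPVert n d) (Sum.inr p)
        have e2 := mid_lb (α := α) v p q
        have e3 := edge_lb v hα hv (Sum.inr q : CPVert n d) t
        calc ENNReal.ofReal (2*α - 1)
            ≤ ENNReal.ofReal ((α/2 - 1/4) + (α + ((α/2 - 1/4) + 0))) := by
              refine ENNReal.ofReal_le_ofReal ?_; linarith
          _ ≤ ENNReal.ofReal (α/2 - 1/4) + ENNReal.ofReal (α + ((α/2 - 1/4) + 0)) :=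
              ENNReal.ofReal_add_le
          _ ≤ ENNReal.ofReal (α/2 - 1/4) + (ENNReal.ofReal α + ENNReal.ofReal ((α/2 - 1/4) + 0)) :=
              add_le_add_right ENNReal.ofReal_add_le _
          _ ≤ ENNReal.ofReal (α/2 - 1/4) + (ENNReal.ofReal α + (ENNReal.ofReal (α/2 - 1/4) + ENNReal.ofReal 0)) := by
              refine add_le_add_right (add_le_add_right ENNReal.ofReal_add_le _) _
          _ ≤ _ := by
              simp only [ENNReal.ofReal_zero]
              exact add_le_add e1 (add_le_add e2 (add_le_add e3 le_rfl))
  · -- ≥ 4 edges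
    refine le_trans ?_ (walk_ge v hα hv (y :: z :: t :: r :: rest) (Sum.inl a))
    refine ENNReal.ofReal_le_ofReal ?_
    have hlen : (4:ℝ) ≤ ((y :: z :: t :: r :: rest).length : ℝ) := by
      simp [List.length_cons]; push_cast; linarith [Nat.cast_nonneg (α := ℝ) rest.length]
    nlinarith

theorem stmt_8 (n d : ℕ) (hn : 0 < n) (hd : 0 < d) (α : ℝ) (hα : 2 ≤ α)
    (v : Fin n → Fin d → ℝ)
    (hv : ∀ i x, |v i x| ≤ (0.5 + 1 / (4 * α)) * α)
    (i j : Fin n) (hij : i ≠ j) (hclose : ‖v i - v j‖ ≤ 1) :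
    ENNReal.ofReal (4 * α - 2) ≤
      netDist (cpWeight n d α v) (Sum.inl i) (Sum.inl j) +
        netDist (cpWeight n d α v) (Sum.inl j) (Sum.inl i) := by

  have hα0 : (0:ℝ) < α := by linarith
  have hv' : ∀ k x, |v k x| ≤ α/2 + 1/4 := by
    intro k x
    have h := hv k x
    have heq : (0.5 + 1 / (4 * α)) * α = α/2 + 1/4 := by field_simp; ring
    linarith [h, heq.symm.le]
  have hcl : ∀ x, |v i x - v j x| ≤ 1 := by
    intro x
    have h := norm_le_pi_norm (v i - v j) x
    simp [Real.norm_eq_abs, Pi.sub_apply] at h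
    exact h.trans hclose
  have h1 := oneway v hα hv' i j hij hcl
  have h2 := oneway v hα hv' j i hij.symm (fun x => by
    have := hcl x; rwa [abs_sub_comm] at this)
  calc ENNReal.ofReal (4 * α - 2)
      = ENNReal.ofReal ((2*α - 1) + (2*α - 1)) := by ring_nf
    _ = ENNReal.ofReal (2*α - 1) + ENNReal.ofReal (2*α - 1) :=
        ENNReal.ofReal_add (by linarith) (by linarith)
    _ ≤ _ := add_le_add h1 h2
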